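/- (Variance of the PRF estimator) Let w_1, ..., w_m be i.i.d. standard Gaussian random vectors on ℝ^d and let φ(x) = (exp(−‖x‖²/2)/√m)·(exp(⟨w_1, x⟩), ..., exp(⟨w_m, x⟩)) be the PRF map. Then for all x, y ∈ ℝ^d, Var(⟨φ(x), φ(y)⟩) = (1/m)·(exp(‖x + y‖²) − 1)·exp(⟨x, y⟩)². -/

import Mathlib

open MeasureTheory ProbabilityTheory
open scoped ENNReal NNReal

set_option linter.unusedSectionVars false
set_option linter.unusedVariables false
set_option linter.unnecessarySimpa false

section Helpers
open Real

lemma gaussianReal_eq_withDensity :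
    gaussianReal 0 1 = volume.withDensity (fun x => ENNReal.ofReal (gaussianPDFReal 0 1 x)) := by
  rw [gaussianReal_of_var_ne_zero 0 one_ne_zero]; rfl

lemma pdf_mul_exp (t x : ℝ) :
    gaussianPDFReal 0 1 x * Real.exp (t * x) = Real.exp (t ^ 2 / 2) * gaussianPDFReal t 1 x := by
  simp only [gaussianPDFReal]
  have h : rexp (-(x - 0) ^ 2 / (2 * ((1:NNReal):ℝ))) * rexp (t * x)
      = rexp (t ^ 2 / 2) * rexp (-(x - t) ^ 2 / (2 * ((1:NNReal):ℝ))) := by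
    rw [← Real.exp_add, ← Real.exp_add]
    congr 1
    push_cast
    ring
  rw [mul_assoc, h]
  ring

lemma my_integral_exp_gaussian (t : ℝ) :
    ∫ x, Real.exp (t * x) ∂(gaussianReal 0 1) = Real.exp (t ^ 2 / 2) := by
  rw [gaussianReal_eq_withDensity]
  have hmeas : Measurable fun x => (gaussianPDFReal 0 1 x).toNNReal :=
    (measurable_gaussianPDFReal 0 1).real_toNNReal
  have h2 : (fun x => ENNReal.ofReal (gaussianPDFReal 0 1 x))
      = fun x => ((gaussianPDFReal 0 1 x).toNNReal : ℝ≥0∞) := rfl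
  rw [h2, integral_withDensity_eq_integral_smul hmeas]
  have h3 : ∀ x, ((gaussianPDFReal 0 1 x).toNNReal) • Real.exp (t * x)
      = Real.exp (t ^ 2 / 2) * gaussianPDFReal t 1 x := by
    intro x
    rw [NNReal.smul_def, smul_eq_mul, Real.coe_toNNReal _ (gaussianPDFReal_nonneg 0 1 x),
      pdf_mul_exp]
  simp only [h3]
  rw [integral_const_mul, integral_gaussianPDFReal_eq_one t one_ne_zero, mul_one]

lemma my_integrable_exp_gaussian (t : ℝ) :
    Integrable (fun x => Real.exp (t * x)) (gaussianReal 0 1) := by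
  rw [gaussianReal_eq_withDensity]
  have hmeas : Measurable fun x => (gaussianPDFReal 0 1 x).toNNReal :=
    (measurable_gaussianPDFReal 0 1).real_toNNReal
  have h2 : (fun x => ENNReal.ofReal (gaussianPDFReal 0 1 x))
      = fun x => ((gaussianPDFReal 0 1 x).toNNReal : ℝ≥0∞) := rfl
  rw [h2, integrable_withDensity_iff_integrable_smul hmeas]
  have h3 : (fun x => ((gaussianPDFReal 0 1 x).toNNReal : ℝ≥0) • Real.exp (t * x))
      = fun x => Real.exp (t ^ 2 / 2) * gaussianPDFReal t 1 x := by
    funext x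
    rw [NNReal.smul_def, smul_eq_mul, Real.coe_toNNReal _ (gaussianPDFReal_nonneg 0 1 x),
      pdf_mul_exp]
  rw [h3]
  exact (integrable_gaussianPDFReal t 1).const_mul _

section PiHelpers
variable {ι E : Type*} [Fintype ι] [DecidableEq ι] [MeasurableSpace E]

lemma my_integral_pi_prod (μ : Measure E) [SigmaFinite μ] (f : ι → E → ℝ) :
    ∫ w, ∏ i, f i (w i) ∂(Measure.pi fun _ : ι => μ) = ∏ i, ∫ x, f i x ∂μ := by
  letI : MeasureSpace E := ⟨μ⟩
  exact MeasureTheory.integral_fintype_prod_eq_prod f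

lemma my_integrable_pi_prod (μ : Measure E) [SigmaFinite μ] (f : ι → E → ℝ)
    (hf : ∀ i, Integrable (f i) μ) :
    Integrable (fun w => ∏ i, f i (w i)) (Measure.pi fun _ : ι => μ) := by
  letI : MeasureSpace E := ⟨μ⟩
  exact Integrable.fintype_prod hf

lemma eval_eq_prod (i : ι) (f : E → ℝ) (w : ι → E) :
    f (w i) = ∏ k, (fun e => if k = i then f e else 1) (w k) := by
  simp only
  rw [Finset.prod_ite_eq' Finset.univ i (fun k => f (w k))]
  simp

lemma my_integral_eval (μ : Measure E) [IsProbabilityMeasure μ] (i : ι) (f : E → ℝ) :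
    ∫ w, f (w i) ∂(Measure.pi fun _ : ι => μ) = ∫ x, f x ∂μ := by
  simp_rw [eval_eq_prod i f]
  have hpp := my_integral_pi_prod μ (fun k e => if k = i then f e else 1)
  rw [hpp]
  rw [show (∫ x, f x ∂μ) = ∏ k, (if k = i then ∫ x, f x ∂μ else 1) by
    rw [Finset.prod_ite_eq' Finset.univ i (fun _ => ∫ x, f x ∂μ)]; simp]
  refine Finset.prod_congr rfl fun k _ => ?_
  split_ifs <;> simp

lemma my_integrable_eval (μ : Measure E) [IsProbabilityMeasure μ] (i : ι) {f : E → ℝ}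
    (hf : Integrable f μ) :
    Integrable (fun w => f (w i)) (Measure.pi fun _ : ι => μ) := by
  simp_rw [eval_eq_prod i f]
  have hpp := my_integrable_pi_prod μ (fun k e => if k = i then f e else 1) (fun k => by
    by_cases h : k = i <;> simp [h, hf])
  simpa using hpp

lemma eval_two_eq_prod {i j : ι} (hij : i ≠ j) (f g : E → ℝ) (w : ι → E) :
    f (w i) * g (w j)
      = ∏ k, (fun e => (if k = i then f e else 1) * (if k = j then g e else 1)) (w k) := by
  simp only
  rw [Finset.prod_mul_distrib,
    Finset.prod_ite_eq' Finset.univ i (fun k => f (w k)),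
    Finset.prod_ite_eq' Finset.univ j (fun k => g (w k))]
  simp

lemma my_integral_eval_two (μ : Measure E) [IsProbabilityMeasure μ] {i j : ι} (hij : i ≠ j)
    (f g : E → ℝ) :
    ∫ w, f (w i) * g (w j) ∂(Measure.pi fun _ : ι => μ)
      = (∫ x, f x ∂μ) * ∫ x, g x ∂μ := by
  simp_rw [eval_two_eq_prod hij f g]
  have hpp := my_integral_pi_prod μ
    (fun k e => (if k = i then f e else 1) * (if k = j then g e else 1))
  rw [hpp]
  rw [show ((∫ x, f x ∂μ) * ∫ x, g x ∂μ)
      = ∏ k, ((if k = i then ∫ x, f x ∂μ else 1) * (if k = j then ∫ x, g x ∂μ else 1)) by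
    rw [Finset.prod_mul_distrib, Finset.prod_ite_eq' Finset.univ i (fun _ => ∫ x, f x ∂μ),
      Finset.prod_ite_eq' Finset.univ j (fun _ => ∫ x, g x ∂μ)]
    simp]
  refine Finset.prod_congr rfl fun k _ => ?_
  rcases eq_or_ne k i with rfl | hki
  · simp [hij, (by simpa using hij : k ≠ j)]
  · rcases eq_or_ne k j with rfl | hkj
    · simp [hki]
    · simp [hki, hkj]

lemma my_integrable_eval_two (μ : Measure E) [IsProbabilityMeasure μ] {i j : ι} (hij : i ≠ j)
    {f g : E → ℝ} (hf : Integrable f μ) (hg : Integrable g μ) :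
    Integrable (fun w => f (w i) * g (w j)) (Measure.pi fun _ : ι => μ) := by
  simp_rw [eval_two_eq_prod hij f g]
  have hpp := my_integrable_pi_prod μ
    (fun k e => (if k = i then f e else 1) * (if k = j then g e else 1)) (fun k => by
      rcases eq_or_ne k i with rfl | hki
      · simpa [hij, (by simpa using hij : k ≠ j)] using hf
      · rcases eq_or_ne k j with rfl | hkj
        · simpa [hki] using hg
        · simpa [hki, hkj] using (integrable_const (1:ℝ)))
  simpa using hpp

end PiHelpers
lemma my_integral_exp_dot (d : ℕ) (s : Fin d → ℝ) :
    ∫ w, Real.exp (∑ j, w j * s j) ∂(Measure.pi fun _ : Fin d => gaussianReal 0 1)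
      = Real.exp ((∑ j, (s j) ^ 2) / 2) := by
  have h1 : ∀ w : Fin d → ℝ, Real.exp (∑ j, w j * s j)
      = ∏ j, (fun u => Real.exp (s j * u)) (w j) := by
    intro w
    rw [Real.exp_sum]
    exact Finset.prod_congr rfl fun j _ => by rw [mul_comm]
  simp_rw [h1]
  have hpp := my_integral_pi_prod (gaussianReal 0 1) (fun (j : Fin d) u => Real.exp (s j * u))
  rw [hpp]
  simp_rw [my_integral_exp_gaussian]
  rw [← Real.exp_sum, Finset.sum_div]

lemma my_integrable_exp_dot (d : ℕ) (s : Fin d → ℝ) :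
    Integrable (fun w => Real.exp (∑ j, w j * s j))
      (Measure.pi fun _ : Fin d => gaussianReal 0 1) := by
  have h1 : ∀ w : Fin d → ℝ, Real.exp (∑ j, w j * s j)
      = ∏ j, (fun u => Real.exp (s j * u)) (w j) := by
    intro w
    rw [Real.exp_sum]
    exact Finset.prod_congr rfl fun j _ => by rw [mul_comm]
  simp_rw [h1]
  have hpp := my_integrable_pi_prod (gaussianReal 0 1) (fun (j : Fin d) u => Real.exp (s j * u))
    (fun j => my_integrable_exp_gaussian (s j))
  simpa using hpp


lemma final_alg (M C u v w2 : ℝ) (hM : M ≠ 0) (hu : u * u = v)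
    (hC : C * C * v = w2 / (M * M)) :
    M * (M * (C * C * (u * u)) + (C * C * (v * v) - C * C * (u * u)))
        - (M * (C * u)) ^ 2 = (1 / M) * (v - 1) * w2 := by
  subst hu
  field_simp at hC ⊢
  linear_combination (u * u - 1) * hC

end Helpers

/-- The joint law of `m` i.i.d. standard Gaussian random vectors on `ℝ^d`. -/
noncomputable def iidStdGaussian (m d : ℕ) : Measure (Fin m → Fin d → ℝ) :=
  Measure.pi fun _ => Measure.pi fun _ => gaussianReal 0 1

/-- The Positive Random Feature (PRF) map with `m` features:
`φ(x)_i = (exp (−‖x‖²/2)/√m) · exp ⟨w_i, x⟩`. -/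
noncomputable def prf (m d : ℕ) (W : Fin m → Fin d → ℝ) (x : Fin d → ℝ) : Fin m → ℝ :=
  fun i => (Real.exp (-(∑ j, (x j) ^ 2) / 2) / Real.sqrt m) * Real.exp (∑ j, W i j * x j)

theorem variance_prf_inner (m d : ℕ) (hm : 0 < m) (x y : Fin d → ℝ) :
    variance (fun W => ∑ i, prf m d W x i * prf m d W y i) (iidStdGaussian m d)
      = (1 / m) * (Real.exp (∑ j, (x j + y j) ^ 2) - 1) * (Real.exp (∑ j, x j * y j)) ^ 2 := by
  classical
  have hm' : (m:ℝ) ≠ 0 := Nat.cast_ne_zero.mpr hm.ne'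
  set γd : Measure (Fin d → ℝ) := Measure.pi fun _ : Fin d => gaussianReal 0 1 with hγd
  have hμ : iidStdGaussian m d = Measure.pi fun _ : Fin m => γd := rfl
  haveI : IsProbabilityMeasure γd := by rw [hγd]; infer_instance
  haveI : IsProbabilityMeasure (iidStdGaussian m d) := by rw [hμ]; infer_instance
  set c : ℝ := Real.exp (-(∑ j, (x j)^2)/2) * Real.exp (-(∑ j, (y j)^2)/2) / m with hc
  set h : (Fin d → ℝ) → ℝ := fun w => Real.exp (∑ j, w j * (x j + y j)) with hh
  set T : ℝ := ∑ j, (x j + y j)^2 with hT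
  -- pointwise rewriting of the random variable
  have hkey : (fun W => ∑ i, prf m d W x i * prf m d W y i)
      = fun W : Fin m → Fin d → ℝ => ∑ i, c * h (W i) := by
    funext W
    refine Finset.sum_congr rfl fun i _ => ?_
    have hsq : Real.sqrt m * Real.sqrt m = (m:ℝ) := Real.mul_self_sqrt (Nat.cast_nonneg m)
    have hsum : (∑ j, W i j * x j) + (∑ j, W i j * y j) = ∑ j, W i j * (x j + y j) := by
      rw [← Finset.sum_add_distrib]
      exact Finset.sum_congr rfl fun j _ => (mul_add _ _ _).symm
    have hsqrt0 : Real.sqrt m ≠ 0 := by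
      have : (0:ℝ) < Real.sqrt m := Real.sqrt_pos.mpr (by exact_mod_cast hm)
      exact this.ne'
    simp only [prf, hc, hh]
    rw [← hsum, Real.exp_add, show ((m:ℝ)) = Real.sqrt m * Real.sqrt m from hsq.symm]
    field_simp
    rw [Real.sqrt_sq (Real.sqrt_nonneg _)]
  rw [hkey]
  -- basic facts about h
  have hmeas_h : Measurable h := by
    rw [hh]
    exact Real.measurable_exp.comp (by fun_prop)
  have hhint : Integrable h γd := by rw [hγd, hh]; exact my_integrable_exp_dot d _
  have hI1 : ∫ w, h w ∂γd = Real.exp (T/2) := by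
    rw [hγd, hh, hT]; exact my_integral_exp_dot d _
  have hsq_eq : (fun w : Fin d → ℝ => h w * h w)
      = fun w => Real.exp (∑ j, w j * (2*(x j + y j))) := by
    funext w
    simp only [hh]
    rw [← Real.exp_add, ← Finset.sum_add_distrib]
    congr 1
    exact Finset.sum_congr rfl fun j _ => by ring
  have hhsqint : Integrable (fun w => h w * h w) γd := by
    rw [hsq_eq, hγd]; exact my_integrable_exp_dot d _
  have hI2 : ∫ w, h w * h w ∂γd = Real.exp T * Real.exp T := by
    rw [hsq_eq, hγd, my_integral_exp_dot d _, ← Real.exp_add]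
    congr 1
    have h4 : ∑ j, (2*(x j + y j))^2 = 4 * T := by
      rw [hT, Finset.mul_sum]
      exact Finset.sum_congr rfl fun j _ => by ring
    rw [h4]; ring
  -- integrability / MemLp over the product measure
  have hint2 : ∀ i : Fin m, Integrable (fun W : Fin m → Fin d → ℝ => h (W i) * h (W i))
      (iidStdGaussian m d) := by
    intro i
    rw [hμ]
    have := my_integrable_eval (ι := Fin m) γd i hhsqint
    simpa using this
  have hmem : ∀ i : Fin m, MemLp (fun W : Fin m → Fin d → ℝ => h (W i)) 2
      (iidStdGaussian m d) := by
    intro i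
    have hma : AEStronglyMeasurable (fun W : Fin m → Fin d → ℝ => h (W i))
        (iidStdGaussian m d) :=
      (hmeas_h.comp (measurable_pi_apply i)).aestronglyMeasurable
    refine (memLp_two_iff_integrable_sq hma).mpr ?_
    simpa [sq] using hint2 i
  have hintX : ∀ i : Fin m, Integrable (fun W : Fin m → Fin d → ℝ => c * h (W i))
      (iidStdGaussian m d) := fun i => ((hmem i).integrable one_le_two).const_mul c
  have hmemX : MemLp (fun W : Fin m → Fin d → ℝ => ∑ i, c * h (W i)) 2 (iidStdGaussian m d) :=
    memLp_finset_sum Finset.univ fun i _ => (hmem i).const_mul c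
  rw [variance_eq_sub hmemX]
  -- first moment
  have hEX : ∫ W, (∑ i, c * h (W i)) ∂(iidStdGaussian m d) = m * (c * Real.exp (T/2)) := by
    rw [integral_finset_sum Finset.univ fun i _ => hintX i]
    have hterm : ∀ i : Fin m, ∫ W, c * h (W i) ∂(iidStdGaussian m d) = c * Real.exp (T/2) := by
      intro i
      rw [integral_const_mul, hμ, my_integral_eval (ι := Fin m) γd i h, hI1]
    simp_rw [hterm]
    rw [Finset.sum_const, Finset.card_univ, Fintype.card_fin, nsmul_eq_mul]
  -- second moment
  have hterm_int : ∀ i k : Fin m,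
      Integrable (fun W : Fin m → Fin d → ℝ => (c*c) * (h (W i) * h (W k)))
        (iidStdGaussian m d) := by
    intro i k
    rcases eq_or_ne i k with rfl | hik
    · exact (hint2 i).const_mul _
    · refine Integrable.const_mul ?_ _
      rw [hμ]
      exact my_integrable_eval_two (ι := Fin m) γd hik hhint hhint
  have hterm_val : ∀ i k : Fin m,
      ∫ W, (c*c) * (h (W i) * h (W k)) ∂(iidStdGaussian m d)
        = if i = k then (c*c) * (Real.exp T * Real.exp T)
          else (c*c) * (Real.exp (T/2) * Real.exp (T/2)) := by
    intro i k
    rcases eq_or_ne i k with rfl | hik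
    · rw [if_pos rfl, integral_const_mul, hμ]
      have := my_integral_eval (ι := Fin m) γd i (fun w => h w * h w)
      rw [this, hI2]
    · rw [if_neg hik, integral_const_mul, hμ,
        my_integral_eval_two (ι := Fin m) γd hik h h, hI1]
  have hEX2 : ∫ W, (∑ i, c * h (W i)) ^ 2 ∂(iidStdGaussian m d)
      = m * ((m : ℝ) * ((c*c) * (Real.exp (T/2) * Real.exp (T/2)))
          + ((c*c) * (Real.exp T * Real.exp T)
            - (c*c) * (Real.exp (T/2) * Real.exp (T/2)))) := by
    have hX2 : (fun W : Fin m → Fin d → ℝ => (∑ i, c * h (W i)) ^ 2)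
        = fun W => ∑ i, ∑ k, (c*c) * (h (W i) * h (W k)) := by
      funext W
      rw [sq, Finset.sum_mul_sum]
      exact Finset.sum_congr rfl fun i _ => Finset.sum_congr rfl fun k _ => by ring
    rw [hX2]
    rw [integral_finset_sum Finset.univ fun i _ =>
      integrable_finset_sum Finset.univ fun k _ => hterm_int i k]
    have hrow : ∀ i : Fin m,
        ∫ W, (∑ k, (c*c) * (h (W i) * h (W k))) ∂(iidStdGaussian m d)
          = (m : ℝ) * ((c*c) * (Real.exp (T/2) * Real.exp (T/2)))
            + ((c*c) * (Real.exp T * Real.exp T)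
              - (c*c) * (Real.exp (T/2) * Real.exp (T/2))) := by
      intro i
      rw [integral_finset_sum Finset.univ fun k _ => hterm_int i k]
      simp_rw [hterm_val i]
      have hsplit : ∀ k : Fin m,
          (if i = k then (c*c) * (Real.exp T * Real.exp T)
            else (c*c) * (Real.exp (T/2) * Real.exp (T/2)))
          = (c*c) * (Real.exp (T/2) * Real.exp (T/2))
            + (if i = k then (c*c) * (Real.exp T * Real.exp T)
                - (c*c) * (Real.exp (T/2) * Real.exp (T/2)) else 0) := by
        intro k; split <;> ring
      simp_rw [hsplit]
      rw [Finset.sum_add_distrib, Finset.sum_const, Finset.sum_ite_eq, Finset.card_univ,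
        Fintype.card_fin, nsmul_eq_mul]
      simp
    simp_rw [hrow]
    rw [Finset.sum_const, Finset.card_univ, Fintype.card_fin, nsmul_eq_mul]
  -- put it together
  have hEXpow : (fun W : Fin m → Fin d → ℝ => ∑ i, c * h (W i)) ^ 2
      = fun W => (∑ i, c * h (W i)) ^ 2 := rfl
  rw [hEXpow]
  rw [hEX2, hEX]
  -- final algebra
  have hTabp : T = (∑ j, (x j)^2) + (∑ j, (y j)^2) + 2 * (∑ j, x j * y j) := by
    rw [hT, Finset.mul_sum, ← Finset.sum_add_distrib, ← Finset.sum_add_distrib]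
    exact Finset.sum_congr rfl fun j _ => by ring
  have hE : Real.exp (-(∑ j, (x j)^2)/2) * Real.exp (-(∑ j, (y j)^2)/2)
        * (Real.exp (-(∑ j, (x j)^2)/2) * Real.exp (-(∑ j, (y j)^2)/2)) * Real.exp T
      = Real.exp (∑ j, x j * y j) * Real.exp (∑ j, x j * y j) := by
    rw [← Real.exp_add, ← Real.exp_add, ← Real.exp_add, ← Real.exp_add]
    congr 1
    rw [hTabp]; ring
  have hI1sq : Real.exp (T/2) * Real.exp (T/2) = Real.exp T := by
    rw [← Real.exp_add]; congr 1; ring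
  have hC : c * c * Real.exp T = (Real.exp (∑ j, x j * y j))^2 / ((m:ℝ) * (m:ℝ)) := by
    rw [hc]
    field_simp
    simp only [neg_div] at hE ⊢
    linear_combination hE
  exact final_alg (m:ℝ) c (Real.exp (T/2)) (Real.exp T)
    ((Real.exp (∑ j, x j * y j))^2) hm' hI1sq hC
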